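/- Let m,N≥1 be integers, α>1, L>0, D≥0, B≥1, η≥0. Let E⊆{x∈ℤ^m : |x|<N} and let T,T':E×E→ℂ be matrices. Assume: (i) T is invertible with operator norm ‖T^{−1}‖≤B on ℓ²(E); (ii) |T^{−1}(x,x')| ≤ e^{−αL|x−x'|_α} whenever x,x'∈E and |x−x'|>D; (iii) |T'(x,x')−T(x,x')| ≤ η e^{−αL|x−x'|_α} for all x,x'∈E; and (iv) η·(2N)^{2m+1}·B²·e^{2αLmD^{1/α}} ≤ 1/2. Then T' is invertible, ‖T'^{−1}‖ ≤ 2B, and |T'^{−1}(x,x')| ≤ 2e^{−αL|x−x'|_α} whenever |x−x'|>D. -/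

import Mathlib

open scoped BigOperators

noncomputable section

/-- `|x| = max_j |x_j|` for an integer vector, as a real number. -/
def intSup {m : ℕ} (x : Fin m → ℤ) : ℝ :=
  ((Finset.univ.sup fun j => (x j).natAbs : ℕ) : ℝ)

/-- `|x|_α = Σ_j |x_j|^{1/α}` for an integer vector. -/
def adist (α : ℝ) {m : ℕ} (x : Fin m → ℤ) : ℝ :=
  ∑ j, |(x j : ℝ)| ^ (1 / α)

/-- The ℓ² operator norm of a matrix indexed by a finite set `E ⊆ ℤ^m`. -/
def opNorm {m : ℕ} {E : Finset (Fin m → ℤ)} (T : Matrix E E ℂ) : ℝ :=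
  ‖Matrix.toEuclideanCLM (𝕜 := ℂ) T‖

open scoped Matrix.Norms.L2Operator NNReal
open Matrix

set_option linter.unusedSectionVars false
set_option linter.unusedVariables false
set_option maxHeartbeats 1000000

section EuclHelpers

variable {n : Type*} [Fintype n] [DecidableEq n]

lemma eucl_coord_le (v : EuclideanSpace ℂ n) (i : n) : ‖v i‖ ≤ ‖v‖ := by
  rw [EuclideanSpace.norm_eq]
  calc ‖v i‖ = Real.sqrt (‖v i‖ ^ 2) := (Real.sqrt_sq (norm_nonneg _)).symm
    _ ≤ _ := Real.sqrt_le_sqrt (Finset.single_le_sum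
        (f := fun i => ‖v i‖ ^ 2) (fun _ _ => sq_nonneg _) (Finset.mem_univ i))

lemma eucl_norm_le_sum (v : EuclideanSpace ℂ n) : ‖v‖ ≤ ∑ i, ‖v i‖ := by
  rw [EuclideanSpace.norm_eq]
  calc Real.sqrt (∑ i, ‖v i‖ ^ 2) ≤ Real.sqrt ((∑ i, ‖v i‖) ^ 2) :=
        Real.sqrt_le_sqrt (Finset.sum_sq_le_sq_sum_of_nonneg (fun _ _ => norm_nonneg _))
    _ = ∑ i, ‖v i‖ := Real.sqrt_sq (Finset.sum_nonneg fun _ _ => norm_nonneg _)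

lemma matrix_entry_le (A : Matrix n n ℂ) (x y : n) :
    ‖A x y‖ ≤ ‖Matrix.toEuclideanCLM (𝕜 := ℂ) A‖ := by
  have h := A.l2_opNorm_mulVec (EuclideanSpace.single y (1 : ℂ))
  rw [EuclideanSpace.norm_single, norm_one, mul_one] at h
  rw [← Matrix.cstar_norm_def]
  refine le_trans ?_ h
  have h2 : ((EuclideanSpace.equiv n ℂ).symm <| A *ᵥ (EuclideanSpace.single y (1 : ℂ))) x
      = A x y := by
    show (A *ᵥ (EuclideanSpace.single y (1 : ℂ))) x = A x y
    simp [Matrix.mulVec, dotProduct, EuclideanSpace.single_apply]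
  calc ‖A x y‖ = ‖((EuclideanSpace.equiv n ℂ).symm <| A *ᵥ (EuclideanSpace.single y (1:ℂ))) x‖ :=
        by rw [h2]
    _ ≤ _ := eucl_coord_le _ x

lemma matrix_norm_le_sum (A : Matrix n n ℂ) : ‖A‖ ≤ ∑ x : n, ∑ y : n, ‖A x y‖ := by
  rw [Matrix.l2_opNorm_def]
  refine ContinuousLinearMap.opNorm_le_bound _
    (Finset.sum_nonneg fun _ _ => Finset.sum_nonneg fun _ _ => norm_nonneg _) fun v => ?_
  have hv : ∀ i, ‖(Matrix.toEuclideanLin (𝕜 := ℂ) A).toContinuousLinearMap v i‖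
      ≤ ∑ y : n, ‖A i y‖ * ‖v‖ := by
    intro i
    have : (Matrix.toEuclideanLin (𝕜 := ℂ) A).toContinuousLinearMap v i
        = ∑ y, A i y * v y := rfl
    rw [this]
    calc ‖∑ y, A i y * v y‖ ≤ ∑ y, ‖A i y * v y‖ := norm_sum_le _ _
      _ ≤ ∑ y, ‖A i y‖ * ‖v‖ := by
          refine Finset.sum_le_sum fun y _ => ?_
          rw [norm_mul]
          exact mul_le_mul_of_nonneg_left (eucl_coord_le v y) (norm_nonneg _)
  calc ‖(Matrix.toEuclideanLin (𝕜 := ℂ) A).toContinuousLinearMap v‖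
      ≤ ∑ i, ‖(Matrix.toEuclideanLin (𝕜 := ℂ) A).toContinuousLinearMap v i‖ :=
        eucl_norm_le_sum _
    _ ≤ ∑ i, ∑ y, ‖A i y‖ * ‖v‖ := Finset.sum_le_sum fun i _ => hv i
    _ = (∑ x : n, ∑ y : n, ‖A x y‖) * ‖v‖ := by rw [Finset.sum_mul]; simp [Finset.sum_mul]

end EuclHelpers

section AdistHelpers

lemma rpow_add_le {p a b : ℝ} (hp : 0 ≤ p) (hp1 : p ≤ 1) (ha : 0 ≤ a) (hb : 0 ≤ b) :
    (a + b) ^ p ≤ a ^ p + b ^ p := by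
  lift a to ℝ≥0 using ha
  lift b to ℝ≥0 using hb
  have := NNReal.rpow_add_le_add_rpow a b hp hp1
  have h2 : ((a + b : ℝ≥0) : ℝ) ^ p ≤ ((a ^ p + b ^ p : ℝ≥0) : ℝ) := by
    rw [← NNReal.coe_rpow]; exact_mod_cast this
  push_cast [NNReal.coe_rpow] at h2
  exact_mod_cast h2

lemma adist_nonneg' {α : ℝ} {m : ℕ} (x : Fin m → ℤ) : 0 ≤ adist α x :=
  Finset.sum_nonneg fun _ _ => Real.rpow_nonneg (abs_nonneg _) _

lemma adist_triangle {α : ℝ} (hα : 1 < α) {m : ℕ} (u v : Fin m → ℤ) :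
    adist α (u + v) ≤ adist α u + adist α v := by
  rw [adist, adist, adist, ← Finset.sum_add_distrib]
  refine Finset.sum_le_sum fun j _ => ?_
  have hp : (0:ℝ) ≤ 1 / α := by positivity
  have hp1 : 1 / α ≤ 1 := by
    rw [div_le_one (by linarith)]; linarith
  calc |((u + v) j : ℝ)| ^ (1 / α) ≤ (|(u j : ℝ)| + |(v j : ℝ)|) ^ (1 / α) := by
        refine Real.rpow_le_rpow (abs_nonneg _) ?_ hp
        simp only [Pi.add_apply]
        push_cast
        exact abs_add_le _ _
    _ ≤ |(u j : ℝ)| ^ (1 / α) + |(v j : ℝ)| ^ (1 / α) :=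
        rpow_add_le hp hp1 (abs_nonneg _) (abs_nonneg _)

lemma abs_le_intSup {m : ℕ} (v : Fin m → ℤ) (j : Fin m) : |(v j : ℝ)| ≤ intSup v := by
  rw [intSup]
  have : ((v j).natAbs : ℝ) ≤ ((Finset.univ.sup fun j => (v j).natAbs : ℕ) : ℝ) := by
    exact_mod_cast Nat.cast_le (α := ℝ) |>.mpr
      (Finset.le_sup (f := fun j => (v j).natAbs) (Finset.mem_univ j))
  calc |(v j : ℝ)| = ((v j).natAbs : ℝ) := by
        rw [Nat.cast_natAbs, Int.cast_abs]
    _ ≤ _ := this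

lemma adist_le_of_sup_le {α D : ℝ} (hα : 1 < α) (hD : 0 ≤ D) {m : ℕ} (v : Fin m → ℤ)
    (h : intSup v ≤ D) : adist α v ≤ m * D ^ (1 / α) := by
  rw [adist]
  calc ∑ j, |(v j : ℝ)| ^ (1 / α) ≤ ∑ _j : Fin m, D ^ (1 / α) :=
        Finset.sum_le_sum fun j _ =>
          Real.rpow_le_rpow (abs_nonneg _) ((abs_le_intSup v j).trans h) (by positivity)
    _ = m * D ^ (1 / α) := by rw [Finset.sum_const]; simp [mul_comm]

lemma card_le_box {m N : ℕ} (hN : 1 ≤ N) (E : Finset (Fin m → ℤ))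
    (hE : ∀ x ∈ E, ∀ j, |x j| < (N : ℤ)) : (E.card : ℝ) ≤ (2 * (N:ℝ)) ^ m := by
  have hsub : E ⊆ Fintype.piFinset fun _ : Fin m => Finset.Ioo (-(N:ℤ)) N := by
    intro x hx
    rw [Fintype.mem_piFinset]
    intro j
    rw [Finset.mem_Ioo]
    constructor
    · linarith [(abs_lt.mp (hE x hx j)).1]
    · exact (abs_lt.mp (hE x hx j)).2
  have hcard : E.card ≤ (2 * N - 1) ^ m := by
    calc E.card ≤ (Fintype.piFinset fun _ : Fin m => Finset.Ioo (-(N:ℤ)) N).card :=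
          Finset.card_le_card hsub
      _ = (2 * N - 1) ^ m := by
          rw [Fintype.card_piFinset]
          simp only [Int.card_Ioo]
          rw [Finset.prod_const, Finset.card_univ, Fintype.card_fin]
          congr 1
          omega
  calc (E.card : ℝ) ≤ ((2 * N - 1 : ℕ) : ℝ) ^ m := by exact_mod_cast hcard
    _ ≤ (2 * (N:ℝ)) ^ m := by
        refine pow_le_pow_left₀ (by positivity) ?_ m
        have h2 : ((2 * N - 1 : ℕ) : ℝ) = 2 * (N:ℝ) - 1 := by
          push_cast [Nat.cast_sub (by omega : 1 ≤ 2 * N)]; ring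
        rw [h2]
        linarith

end AdistHelpers

/-- Gaussian-type weight used throughout the proof. -/
def gE {m : ℕ} (α L : ℝ) {E : Finset (Fin m → ℤ)} (x x' : E) : ℝ :=
  Real.exp (-(α * L * adist α ((x : Fin m → ℤ) - (x' : Fin m → ℤ))))

lemma gE_pos {m : ℕ} {α L : ℝ} {E : Finset (Fin m → ℤ)} (x x' : E) : 0 < gE α L x x' :=
  Real.exp_pos _

lemma gE_le_one {m : ℕ} {α L : ℝ} (hαL : 0 ≤ α * L) {E : Finset (Fin m → ℤ)} (x x' : E) :
    gE α L x x' ≤ 1 := by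
  rw [gE, ← Real.exp_zero]
  apply Real.exp_le_exp.mpr
  have := adist_nonneg' (α := α) ((x : Fin m → ℤ) - (x' : Fin m → ℤ))
  nlinarith

lemma gE_chain {m : ℕ} {α L : ℝ} (hα : 1 < α) (hαL : 0 ≤ α * L)
    {E : Finset (Fin m → ℤ)} (x y z x' : E) :
    gE α L x y * gE α L y z * gE α L z x' ≤ gE α L x x' := by
  rw [gE, gE, gE, gE, ← Real.exp_add, ← Real.exp_add]
  apply Real.exp_le_exp.mpr
  have hdec : ((x : Fin m → ℤ) - (x' : Fin m → ℤ)) =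
      ((x : Fin m → ℤ) - (y : Fin m → ℤ)) + (((y : Fin m → ℤ) - (z : Fin m → ℤ)) +
        ((z : Fin m → ℤ) - (x' : Fin m → ℤ))) := by abel
  have h1 : adist α ((x : Fin m → ℤ) - (x' : Fin m → ℤ)) ≤
      adist α ((x : Fin m → ℤ) - (y : Fin m → ℤ)) +
      (adist α ((y : Fin m → ℤ) - (z : Fin m → ℤ)) +
        adist α ((z : Fin m → ℤ) - (x' : Fin m → ℤ))) := by
    rw [hdec]
    refine (adist_triangle hα _ _).trans ?_
    exact add_le_add_right (adist_triangle hα _ _) _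
  nlinarith

/-- stability of the inverse with off-diagonal decay away from
distance `D`, under a small perturbation. -/
theorem inverse_stable_offdiag_decay {m N : ℕ} (hm : 1 ≤ m) (hN : 1 ≤ N)
    {α L D B η : ℝ} (hα : 1 < α) (hL : 0 < L) (hD : 0 ≤ D) (hB : 1 ≤ B) (hη : 0 ≤ η)
    (E : Finset (Fin m → ℤ)) (hE : ∀ x ∈ E, ∀ j, |x j| < (N : ℤ))
    (T T' : Matrix E E ℂ)
    (hTunit : IsUnit T)
    (hTnorm : opNorm T⁻¹ ≤ B)
    (hTdecay : ∀ x x' : E, D < intSup ((x : Fin m → ℤ) - (x' : Fin m → ℤ)) →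
      ‖T⁻¹ x x'‖ ≤ Real.exp (-(α * L * adist α ((x : Fin m → ℤ) - (x' : Fin m → ℤ)))))
    (hdiff : ∀ x x' : E, ‖T' x x' - T x x'‖ ≤
      η * Real.exp (-(α * L * adist α ((x : Fin m → ℤ) - (x' : Fin m → ℤ)))))
    (hsmall : η * (2 * (N : ℝ)) ^ (2 * m + 1) * B ^ 2 *
        Real.exp (2 * α * L * m * D ^ (1 / α)) ≤ 1 / 2) :
    IsUnit T' ∧ opNorm T'⁻¹ ≤ 2 * B ∧
      ∀ x x' : E, D < intSup ((x : Fin m → ℤ) - (x' : Fin m → ℤ)) →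
        ‖T'⁻¹ x x'‖ ≤
          2 * Real.exp (-(α * L * adist α ((x : Fin m → ℤ) - (x' : Fin m → ℤ)))) := by
  classical
  have hα0 : (0:ℝ) < α := lt_trans one_pos hα
  have hαL : (0:ℝ) < α * L := mul_pos hα0 hL
  have hB0 : (0:ℝ) < B := lt_of_lt_of_le one_pos hB
  have hN1 : (1:ℝ) ≤ (N:ℝ) := by exact_mod_cast hN
  set c : ℝ := α * L * m * D ^ (1 / α) with hc
  have hDa : (0:ℝ) ≤ D ^ (1 / α) := Real.rpow_nonneg hD _
  have hc0 : 0 ≤ c := by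
    rw [hc]
    have : (0:ℝ) ≤ (m:ℝ) := Nat.cast_nonneg m
    positivity
  set C : ℝ := B * Real.exp c with hC
  have hexpc1 : (1:ℝ) ≤ Real.exp c := Real.one_le_exp hc0
  have hC1 : (1:ℝ) ≤ C := by
    rw [hC]; nlinarith
  have hC0 : (0:ℝ) < C := lt_of_lt_of_le one_pos hC1
  set K : ℝ := ((E.card : ℝ)) ^ 2 with hK
  have hK0 : 0 ≤ K := sq_nonneg _
  have hKle : K ≤ (2 * (N:ℝ)) ^ (2 * m) := by
    rw [hK]
    have h1 := card_le_box hN E hE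
    calc ((E.card : ℝ)) ^ 2 ≤ ((2 * (N:ℝ)) ^ m) ^ 2 := by
          refine pow_le_pow_left₀ (Nat.cast_nonneg _) h1 2
      _ = (2 * (N:ℝ)) ^ (2 * m) := by rw [← pow_mul, Nat.mul_comm m 2]
  -- key smallness facts
  have hexp2 : Real.exp (2 * α * L * m * D ^ (1 / α)) = Real.exp c ^ 2 := by
    have : 2 * α * L * (m:ℝ) * D ^ (1 / α) = c + c := by rw [hc]; ring
    rw [this, Real.exp_add, sq]
  have hkey : C ^ 2 * η * K ≤ 1 / 4 := by
    have hpow : (2 * (N:ℝ)) ^ (2 * m + 1) = (2 * (N:ℝ)) ^ (2 * m) * (2 * (N:ℝ)) :=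
      pow_succ _ _
    have h2N : (2:ℝ) ≤ 2 * (N:ℝ) := by linarith
    have hEx : (0:ℝ) < Real.exp c ^ 2 := by positivity
    have hsmall' : η * ((2 * (N:ℝ)) ^ (2 * m) * (2 * (N:ℝ))) * B ^ 2 *
        Real.exp c ^ 2 ≤ 1 / 2 := by
      rw [← hpow, ← hexp2]; exact hsmall
    have hbig : 0 ≤ η * (2 * (N:ℝ)) ^ (2 * m) * B ^ 2 * Real.exp c ^ 2 := by positivity
    have h3 : η * (2 * (N:ℝ)) ^ (2 * m) * B ^ 2 * Real.exp c ^ 2 * 2 ≤ 1 / 2 := by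
      nlinarith
    have h4 : C ^ 2 * η * K ≤ η * (2 * (N:ℝ)) ^ (2 * m) * B ^ 2 * Real.exp c ^ 2 := by
      rw [hC]
      have : B * Real.exp c ^ 1 = B * Real.exp c := by ring
      have hηK : η * K ≤ η * (2 * (N:ℝ)) ^ (2 * m) := by
        exact mul_le_mul_of_nonneg_left hKle hη
      nlinarith [sq_nonneg (B * Real.exp c), mul_le_mul_of_nonneg_left hKle hη]
    nlinarith
  have hq : C * η * K ≤ 1 / 4 := by
    have h0 : 0 ≤ (C - 1) * (C * η * K) :=
      mul_nonneg (sub_nonneg.mpr hC1) (mul_nonneg (mul_nonneg hC0.le hη) hK0)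
    nlinarith [h0]
  -- matrix setup
  set Δ : Matrix E E ℂ := T' - T with hΔdef
  have hΔg : ∀ y z : E, ‖Δ y z‖ ≤ η * gE α L y z := by
    intro y z
    have := hdiff y z
    simpa [hΔdef, Matrix.sub_apply, gE] using this
  have hTn : ‖T⁻¹‖ ≤ B := hTnorm
  have hdetT : IsUnit T.det := (Matrix.isUnit_iff_isUnit_det T).mp hTunit
  -- norm of Δ
  have hΔnorm : ‖Δ‖ ≤ η * K := by
    calc ‖Δ‖ ≤ ∑ y : E, ∑ z : E, ‖Δ y z‖ := matrix_norm_le_sum Δ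
      _ ≤ ∑ y : E, ∑ z : E, η := by
          refine Finset.sum_le_sum fun y _ => Finset.sum_le_sum fun z _ => ?_
          calc ‖Δ y z‖ ≤ η * gE α L y z := hΔg y z
            _ ≤ η * 1 := mul_le_mul_of_nonneg_left (gE_le_one hαL.le y z) hη
            _ = η := mul_one η
      _ = η * K := by
          rw [Finset.sum_const, Finset.sum_const]
          simp only [Finset.card_univ, Fintype.card_coe, smul_eq_mul, nsmul_eq_mul]
          rw [hK]; ring
  set S : Matrix E E ℂ := T⁻¹ * Δ with hSdef
  have hSnorm : ‖S‖ ≤ 1 / 4 := by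
    calc ‖S‖ ≤ ‖T⁻¹‖ * ‖Δ‖ := norm_mul_le _ _
      _ ≤ B * (η * K) := by
          refine mul_le_mul hTn hΔnorm (norm_nonneg _) (by linarith)
      _ ≤ C * η * K := by
          calc B * (η * K) ≤ (B * Real.exp c) * (η * K) :=
                mul_le_mul_of_nonneg_right (le_mul_of_one_le_right hB0.le hexpc1)
                  (mul_nonneg hη hK0)
            _ = C * η * K := by rw [hC]; ring
      _ ≤ 1 / 4 := hq
  have hSlt : ‖-S‖ < 1 := by rw [norm_neg]; linarith
  have hone : IsUnit (1 + S) := by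
    have h := (Units.oneSub (-S) hSlt).isUnit
    have hval : ((Units.oneSub (-S) hSlt : (Matrix E E ℂ)ˣ) : Matrix E E ℂ) = 1 + S := by
      show 1 - -S = 1 + S
      rw [sub_neg_eq_add]
    rwa [hval] at h
  have hfact : T' = T * (1 + S) := by
    have hTinv : T * T⁻¹ = 1 := Matrix.mul_nonsing_inv T hdetT
    calc T' = T + Δ := by rw [hΔdef]; abel
      _ = T + (T * T⁻¹) * Δ := by rw [hTinv, one_mul]
      _ = T * (1 + S) := by rw [hSdef, mul_add, mul_one, mul_assoc]
  have hT'unit : IsUnit T' := by rw [hfact]; exact hTunit.mul hone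
  have hdetT' : IsUnit T'.det := (Matrix.isUnit_iff_isUnit_det T').mp hT'unit
  have hdetone : IsUnit (1 + S).det := (Matrix.isUnit_iff_isUnit_det _).mp hone
  -- norm of (1+S)⁻¹
  set U : Matrix E E ℂ := (1 + S)⁻¹ with hU
  have honeU : (1 + S) * U = 1 := Matrix.mul_nonsing_inv _ hdetone
  have hUeq : U = 1 - S * U := by
    have h2 : U + S * U = 1 := by
      calc U + S * U = (1 + S) * U := by rw [add_mul, one_mul]
        _ = 1 := honeU
    exact eq_sub_of_add_eq h2
  have hnorm_one : ‖(1 : Matrix E E ℂ)‖ ≤ 1 := by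
    have hmap : (Matrix.toEuclideanCLM (𝕜 := ℂ) (1 : Matrix E E ℂ)) = 1 :=
      _root_.map_one _
    rw [Matrix.cstar_norm_def, hmap, ContinuousLinearMap.one_def]
    exact ContinuousLinearMap.norm_id_le
  have hUnorm : ‖U‖ ≤ 2 := by
    have h1 : ‖U‖ ≤ 1 + ‖S‖ * ‖U‖ := by
      calc ‖U‖ = ‖1 - S * U‖ := by rw [← hUeq]
        _ ≤ ‖(1 : Matrix E E ℂ)‖ + ‖S * U‖ := norm_sub_le _ _
        _ ≤ 1 + ‖S‖ * ‖U‖ := add_le_add hnorm_one (norm_mul_le _ _)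
    have h2 : ‖S‖ * ‖U‖ ≤ (1/4) * ‖U‖ :=
      mul_le_mul_of_nonneg_right hSnorm (norm_nonneg _)
    have := norm_nonneg U
    linarith
  have hinvfact : T'⁻¹ = U * T⁻¹ := by
    rw [hfact, Matrix.mul_inv_rev, hU]
  have hT'norm : ‖T'⁻¹‖ ≤ 2 * B := by
    rw [hinvfact]
    calc ‖U * T⁻¹‖ ≤ ‖U‖ * ‖T⁻¹‖ := norm_mul_le _ _
      _ ≤ 2 * B := mul_le_mul hUnorm hTn (norm_nonneg _) (by norm_num)
  refine ⟨hT'unit, hT'norm, ?_⟩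
  -- entrywise decay
  cases isEmpty_or_nonempty (↥E) with
  | inl h => exact fun x => (IsEmpty.false x).elim
  | inr hne =>
  -- uniform bound on entries of T⁻¹
  have hCg : ∀ x y : E, ‖T⁻¹ x y‖ ≤ C * gE α L x y := by
    intro x y
    by_cases hxy : D < intSup ((x : Fin m → ℤ) - (y : Fin m → ℤ))
    · calc ‖T⁻¹ x y‖ ≤ gE α L x y := hTdecay x y hxy
        _ ≤ C * gE α L x y := le_mul_of_one_le_left (gE_pos x y).le hC1
    · push_neg at hxy
      have h1 : ‖T⁻¹ x y‖ ≤ B := (matrix_entry_le _ _ _).trans hTnorm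
      have h2 : α * L * adist α ((x : Fin m → ℤ) - (y : Fin m → ℤ)) ≤ c := by
        rw [hc]
        have := adist_le_of_sup_le hα hD ((x : Fin m → ℤ) - (y : Fin m → ℤ)) hxy
        nlinarith
      have h3 : (1:ℝ) ≤ Real.exp c * gE α L x y := by
        rw [gE, ← Real.exp_add, ← Real.exp_zero]
        apply Real.exp_le_exp.mpr
        linarith
      calc ‖T⁻¹ x y‖ ≤ B := h1
        _ ≤ B * (Real.exp c * gE α L x y) := le_mul_of_one_le_right hB0.le h3
        _ = C * gE α L x y := by rw [hC]; ring
  -- triple product bound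
  have htriple : ∀ (X : Matrix E E ℂ) (KX : ℝ), 0 ≤ KX →
      (∀ z u : E, ‖X z u‖ ≤ KX * gE α L z u) →
      ∀ x x' : E, ‖(T⁻¹ * Δ * X) x x'‖ ≤ C * η * KX * K * gE α L x x' := by
    intro X KX hKX hX x x'
    have expand : (T⁻¹ * Δ * X) x x' = ∑ z : E, ∑ y : E, T⁻¹ x y * Δ y z * X z x' := by
      simp only [Matrix.mul_apply, Finset.sum_mul]
    rw [expand]
    have hterm : ∀ z y : E, ‖T⁻¹ x y * Δ y z * X z x'‖ ≤
        C * η * KX * gE α L x x' := by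
      intro z y
      have e1 : ‖T⁻¹ x y * Δ y z * X z x'‖ = ‖T⁻¹ x y‖ * ‖Δ y z‖ * ‖X z x'‖ := by
        rw [norm_mul, norm_mul]
      rw [e1]
      have hb1 : ‖T⁻¹ x y‖ * ‖Δ y z‖ * ‖X z x'‖ ≤
          (C * gE α L x y) * (η * gE α L y z) * (KX * gE α L z x') := by
        have p1 : (0:ℝ) ≤ C * gE α L x y := mul_nonneg hC0.le (gE_pos x y).le
        have p2 : (0:ℝ) ≤ η * gE α L y z := mul_nonneg hη (gE_pos y z).le
        refine mul_le_mul (mul_le_mul (hCg x y) (hΔg y z) (norm_nonneg _) p1)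
          (hX z x') (norm_nonneg _) (mul_nonneg p1 p2)
      have hb2 : (C * gE α L x y) * (η * gE α L y z) * (KX * gE α L z x') =
          (C * η * KX) * (gE α L x y * gE α L y z * gE α L z x') := by ring
      have hb3 : (C * η * KX) * (gE α L x y * gE α L y z * gE α L z x') ≤
          (C * η * KX) * gE α L x x' := by
        exact mul_le_mul_of_nonneg_left (gE_chain hα hαL.le x y z x')
          (mul_nonneg (mul_nonneg hC0.le hη) hKX)
      calc ‖T⁻¹ x y‖ * ‖Δ y z‖ * ‖X z x'‖ ≤ _ := hb1
        _ = _ := hb2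
        _ ≤ (C * η * KX) * gE α L x x' := hb3
    calc ‖∑ z : E, ∑ y : E, T⁻¹ x y * Δ y z * X z x'‖
        ≤ ∑ z : E, ‖∑ y : E, T⁻¹ x y * Δ y z * X z x'‖ := norm_sum_le _ _
      _ ≤ ∑ z : E, ∑ y : E, ‖T⁻¹ x y * Δ y z * X z x'‖ :=
          Finset.sum_le_sum fun z _ => norm_sum_le _ _
      _ ≤ ∑ _z : E, ∑ _y : E, (C * η * KX) * gE α L x x' :=
          Finset.sum_le_sum fun z _ => Finset.sum_le_sum fun y _ => hterm z y
      _ = C * η * KX * K * gE α L x x' := by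
          rw [Finset.sum_const, Finset.sum_const]
          simp only [Finset.card_univ, Fintype.card_coe, smul_eq_mul, nsmul_eq_mul]
          rw [hK]; ring
  -- resolvent identity
  have hid : T'⁻¹ = T⁻¹ - T⁻¹ * Δ * T'⁻¹ := by
    have h1 : T⁻¹ * T = 1 := Matrix.nonsing_inv_mul T hdetT
    have h2 : T' * T'⁻¹ = 1 := Matrix.mul_nonsing_inv T' hdetT'
    have e : T⁻¹ * T' * T'⁻¹ - T⁻¹ * Δ * T'⁻¹ = (T⁻¹ * T) * T'⁻¹ := by
      rw [hΔdef]; noncomm_ring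
    calc T'⁻¹ = (T⁻¹ * T) * T'⁻¹ := by rw [h1, one_mul]
      _ = T⁻¹ * T' * T'⁻¹ - T⁻¹ * Δ * T'⁻¹ := e.symm
      _ = T⁻¹ - T⁻¹ * Δ * T'⁻¹ := by
          rw [mul_assoc, h2, mul_one]
  -- the maximum ratio M
  have hneP : (Finset.univ : Finset (E × E)).Nonempty := Finset.univ_nonempty
  set f : E × E → ℝ := fun p => ‖T'⁻¹ p.1 p.2‖ / gE α L p.1 p.2 with hf
  set M : ℝ := Finset.univ.sup' hneP f with hM
  have hMle : ∀ z u : E, ‖T'⁻¹ z u‖ ≤ M * gE α L z u := by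
    intro z u
    have h := Finset.le_sup' f (Finset.mem_univ (z, u))
    rw [← hM, hf] at h
    simp only at h
    rwa [div_le_iff₀ (gE_pos z u)] at h
  have hM0 : 0 ≤ M := by
    obtain ⟨z, u⟩ := (Classical.arbitrary (E × E) : E × E)
    have h := Finset.le_sup' f (Finset.mem_univ (z, u))
    rw [← hM] at h
    refine le_trans ?_ h
    exact div_nonneg (norm_nonneg _) (gE_pos z u).le
  have hT'g : ∀ z u : E, ‖T'⁻¹ z u‖ ≤ B * 2 := by
    intro z u
    calc ‖T'⁻¹ z u‖ ≤ ‖T'⁻¹‖ := matrix_entry_le _ _ _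
      _ ≤ 2 * B := hT'norm
      _ = B * 2 := by ring
  -- self-improving bound on M
  have hstep : ∀ x x' : E, ‖T'⁻¹ x x'‖ ≤ (C + C * η * M * K) * gE α L x x' := by
    intro x x'
    have hsub : T'⁻¹ x x' = T⁻¹ x x' - (T⁻¹ * Δ * T'⁻¹) x x' := by
      rw [← Matrix.sub_apply, ← hid]
    calc ‖T'⁻¹ x x'‖ = ‖T⁻¹ x x' - (T⁻¹ * Δ * T'⁻¹) x x'‖ := by rw [hsub]
      _ ≤ ‖T⁻¹ x x'‖ + ‖(T⁻¹ * Δ * T'⁻¹) x x'‖ := norm_sub_le _ _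
      _ ≤ C * gE α L x x' + C * η * M * K * gE α L x x' :=
          add_le_add (hCg x x') (htriple T'⁻¹ M hM0 hMle x x')
      _ = (C + C * η * M * K) * gE α L x x' := by ring
  have hMbound : M ≤ 2 * C := by
    obtain ⟨p₀, _, hp₀⟩ := Finset.exists_mem_eq_sup' hneP f
    have hg0 : (0:ℝ) < gE α L p₀.1 p₀.2 := gE_pos _ _
    have hMeq : M = ‖T'⁻¹ p₀.1 p₀.2‖ / gE α L p₀.1 p₀.2 := hM.trans hp₀
    have h1 : M ≤ C + C * η * M * K := by
      calc M = ‖T'⁻¹ p₀.1 p₀.2‖ / gE α L p₀.1 p₀.2 := hMeq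
        _ ≤ C + C * η * M * K := by
            rw [div_le_iff₀ hg0]
            exact hstep p₀.1 p₀.2
    have h2 : C * η * M * K ≤ (1/4) * M := by
      have h := mul_le_mul_of_nonneg_right hq hM0
      calc C * η * M * K = C * η * K * M := by ring
        _ ≤ (1/4) * M := h
    linarith
  -- final bound
  intro x x' hxx'
  have hsub : T'⁻¹ x x' = T⁻¹ x x' - (T⁻¹ * Δ * T'⁻¹) x x' := by
    rw [← Matrix.sub_apply, ← hid]
  have hcorr : ‖(T⁻¹ * Δ * T'⁻¹) x x'‖ ≤ C * η * M * K * gE α L x x' :=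
    htriple T'⁻¹ M hM0 hMle x x'
  have hfrac : C * η * M * K ≤ 1 / 2 := by
    have h0 : 0 ≤ (C * η * K) * (2 * C - M) :=
      mul_nonneg (mul_nonneg (mul_nonneg hC0.le hη) hK0) (sub_nonneg.mpr hMbound)
    have h1 : C * η * M * K ≤ C * η * (2 * C) * K := by nlinarith [h0]
    have h2 : C * η * (2 * C) * K = 2 * (C ^ 2 * η * K) := by ring
    linarith [h1, h2, hkey]
  have hgpos : (0:ℝ) < gE α L x x' := gE_pos _ _
  calc ‖T'⁻¹ x x'‖ = ‖T⁻¹ x x' - (T⁻¹ * Δ * T'⁻¹) x x'‖ := by rw [hsub]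
    _ ≤ ‖T⁻¹ x x'‖ + ‖(T⁻¹ * Δ * T'⁻¹) x x'‖ := norm_sub_le _ _
    _ ≤ gE α L x x' + C * η * M * K * gE α L x x' :=
        add_le_add (hTdecay x x' hxx') hcorr
    _ ≤ gE α L x x' + (1/2) * gE α L x x' := by
        refine add_le_add_right (mul_le_mul_of_nonneg_right hfrac hgpos.le) _
    _ ≤ 2 * gE α L x x' := by linarith
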